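/- Let F^R be a twinfree rooted graph whose root set R has exactly two elements, let G be a twinfree graph (twinfree with empty root set), let z = (z_i)_{i∈V(G)} ∈ [0,1]^{V(G)} satisfy ∑_{i∈V(G)} z_i = 1, and let W_G^z be a z-scaled graphon representation of G with partition (Ω_i)_{i∈V(G)}. Let m = (m_i)_{i∈V(F)} ∈ ℕ^{V(F)} have positive entries with ∑_{i∈R} m_i = 2. Let (x,y) ∈ Ω² and let H^T be the (x,y)-rooted version of G for the partition (Ω_i). If |R| > |T|, then T_{F^R(m)}W_G^z(x,y) = 0. -/

import Mathlib

open scoped Classical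
open MeasureTheory

noncomputable section

variable {Ω : Type*} [MeasurableSpace Ω]

/-- The point assignment sending the roots `p, q` to `x, y` and every other index `i`
to the integration variable `v i`. -/
def asg {A : Type*} [DecidableEq A] (p q : A) (x y : Ω) (v : A → Ω) (i : A) : Ω :=
  if i = p then x else if i = q then y else v i

/-- The rooted induced density `T_{G^{(p,q)}} W (x,y)`: the integral, over assignments of
points of `Ω` to the non-root indices, of the product over unordered pairs `{i,j}` of
distinct indices (enumerated by the strict order `lt`) of `W` on edges and `1 - W` on
non-edges.  (Integrating over all coordinates of `A` with respect to the product
probability measure is equivalent to integrating over the non-root coordinates only,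
since the integrand does not depend on the coordinates at `p` and `q`.) -/
def rdensity {A : Type*} [Fintype A] [DecidableEq A] (lt : A → A → Prop)
    (μ : Measure Ω) (Gr : SimpleGraph A) (p q : A) (W : Ω → Ω → ℝ) (x y : Ω) : ℝ :=
  ∫ v : A → Ω,
    ∏ e ∈ Finset.univ.filter (fun e : A × A => lt e.1 e.2),
      (if Gr.Adj e.1 e.2 then W (asg p q x y v e.1) (asg p q x y v e.2)
       else 1 - W (asg p q x y v e.1) (asg p q x y v e.2))
    ∂(Measure.pi fun _ : A => μ)

/-- The `z`-scaled graphon representation `W_G^z` of `G` for the partition `(Ω_i)`: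
equal to `1[ij ∈ E(G)]` on `Ω_i × Ω_j`. -/
def WGz {VG : Type*} (G : SimpleGraph VG) (Om : VG → Set Ω) : Ω → Ω → ℝ :=
  fun u w => if ∃ i j : VG, G.Adj i j ∧ u ∈ Om i ∧ w ∈ Om j then 1 else 0

/-- The set `X = {v ∈ V(G) : {x,y} ∩ Ω_v ≠ ∅}` of parts hit by `x` or `y`. -/
def hitSet {VG : Type*} (Om : VG → Set Ω) (x y : Ω) : Set VG := {v | x ∈ Om v ∨ y ∈ Om v}

/-- The `(x,y)`-rooted version `H^T` of `G`: every vertex of `X = hitSet Om x y` is blown up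
by a factor `2`; the vertex set is `VG ⊕ X` (original copies plus one duplicate for each
element of `X`), the duplicates `Sum.inr` forming the set `T` of roots.  Adjacency is
inherited through the projection to `VG`. -/
def rootedVersion {VG : Type*} (G : SimpleGraph VG) (Om : VG → Set Ω) (x y : Ω) :
    SimpleGraph (VG ⊕ ↥(hitSet Om x y)) :=
  SimpleGraph.comap (Sum.elim id Subtype.val) G

/-- The root order on the roots `T` of the `(x,y)`-rooted version: the duplicate of the part
containing `x` comes first.  (The value on non-roots is irrelevant.) -/
def TLe {VG : Type*} (Om : VG → Set Ω) (x y : Ω) :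
    (VG ⊕ ↥(hitSet Om x y)) → (VG ⊕ ↥(hitSet Om x y)) → Prop
  | Sum.inr w, Sum.inr w' => x ∈ Om w.val ∨ w = w'
  | _, _ => True

/-- Let `F^R` be a twinfree rooted graph whose root set `R = {r₁, r₂}` has
exactly two elements (ordered `r₁` then `r₂` by the linear order of `VF`), let `G` be a
twinfree graph, `z` a probability vector on `V(G)` and `W_G^z` a `z`-scaled graphon
representation of `G` with partition `(Ω_i)`.  Let `m` have positive entries with
`m r₁ + m r₂ = 2`, let `(x,y) ∈ Ω²` and let `H^T` be the `(x,y)`-rooted version of `G`.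
If `|R| > |T|`, then `T_{F^R(m)} W_G^z (x,y) = 0`.

The blowup `F^R(m)` has vertex set `Σ i, Fin (m i)` with adjacency inherited from `F`; since
`m r₁ = m r₂ = 1`, its ordered pair of roots is `(⟨r₁,0⟩, ⟨r₂,0⟩)`; unordered pairs of its
vertices are enumerated by the lexicographic strict order. -/
theorem stmt15 {VF VG : Type*} [Fintype VF] [LinearOrder VF] [Fintype VG] [DecidableEq VG]
    (μ : Measure Ω) [IsProbabilityMeasure μ] [NullSingletonClass μ]
    (F : SimpleGraph VF) (r₁ r₂ : VF) (hr : r₁ ≠ r₂)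
    (htfF : ∀ u v : VF, Xor' (u ∈ ({r₁, r₂} : Set VF)) (v ∈ ({r₁, r₂} : Set VF)) ∨
      (F.neighborSet u = F.neighborSet v → u = v))
    (G : SimpleGraph VG)
    (htfG : ∀ u v : VG, G.neighborSet u = G.neighborSet v → u = v)
    (z : VG → ℝ) (hz0 : ∀ i, 0 ≤ z i) (hz1 : ∀ i, z i ≤ 1) (hzs : ∑ i : VG, z i = 1)
    (Om : VG → Set Ω) (hOmm : ∀ i, MeasurableSet (Om i))
    (hOmd : ∀ i j : VG, i ≠ j → Disjoint (Om i) (Om j))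
    (hOmu : (⋃ i : VG, Om i) = Set.univ)
    (hOmz : ∀ i, μ (Om i) = ENNReal.ofReal (z i))
    (m : VF → ℕ) (hm : ∀ i, 0 < m i) (hm2 : m r₁ + m r₂ = 2)
    (x y : Ω)
    (hT : (Set.range (Sum.inr : ↥(hitSet Om x y) → VG ⊕ ↥(hitSet Om x y))).ncard < 2) :
    rdensity
      (fun a b : Σ i : VF, Fin (m i) => a.1 < b.1 ∨ (a.1 = b.1 ∧ (a.2 : ℕ) < (b.2 : ℕ)))
      μ (SimpleGraph.comap (Sigma.fst) F)
      ⟨r₁, ⟨0, hm r₁⟩⟩ ⟨r₂, ⟨0, hm r₂⟩⟩ (WGz G Om) x y = 0 := by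
  classical
  -- x and y lie in the same part
  obtain ⟨i₀, hx⟩ : ∃ i, x ∈ Om i := Set.mem_iUnion.mp (hOmu.symm ▸ Set.mem_univ x)
  obtain ⟨j₀, hy'⟩ : ∃ j, y ∈ Om j := Set.mem_iUnion.mp (hOmu.symm ▸ Set.mem_univ y)
  have hij : i₀ = j₀ := by
    by_contra hne
    have h2 : 1 < (Set.range (Sum.inr : ↥(hitSet Om x y) → VG ⊕ ↥(hitSet Om x y))).ncard := by
      rw [Set.one_lt_ncard_iff (Set.toFinite _)]
      refine ⟨Sum.inr ⟨i₀, Or.inl hx⟩, Sum.inr ⟨j₀, Or.inr hy'⟩,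
        Set.mem_range_self _, Set.mem_range_self _, ?_⟩
      simp only [ne_eq, Sum.inr.injEq, Subtype.mk.injEq]
      exact fun h => hne (congrArg Subtype.val h)
    omega
  subst hij
  have hy : y ∈ Om i₀ := hy'
  -- facts about WGz
  have hpart : ∀ (u : Ω) (i : VG), u ∈ Om i → u ∈ Om i₀ → i = i₀ := fun u i hi hi0 => by
    by_contra hne; exact Set.disjoint_left.mp (hOmd i i₀ hne) hi hi0
  have hiffx : ∀ u, (∃ i j, G.Adj i j ∧ x ∈ Om i ∧ u ∈ Om j) ↔ (∃ j, G.Adj i₀ j ∧ u ∈ Om j) := by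
    intro u
    constructor
    · rintro ⟨i, j, hij, hxi, huj⟩
      exact ⟨j, (hpart x i hxi hx) ▸ hij, huj⟩
    · rintro ⟨j, hij, huj⟩
      exact ⟨i₀, j, hij, hx, huj⟩
  have hiffy : ∀ u, (∃ i j, G.Adj i j ∧ y ∈ Om i ∧ u ∈ Om j) ↔ (∃ j, G.Adj i₀ j ∧ u ∈ Om j) := by
    intro u
    constructor
    · rintro ⟨i, j, hij, hyi, huj⟩
      exact ⟨j, (hpart y i hyi hy) ▸ hij, huj⟩
    · rintro ⟨j, hij, huj⟩
      exact ⟨i₀, j, hij, hy, huj⟩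
  have hWeq : ∀ u, WGz G Om x u = WGz G Om y u := by
    intro u
    unfold WGz
    by_cases h : ∃ j, G.Adj i₀ j ∧ u ∈ Om j
    · rw [if_pos ((hiffx u).mpr h), if_pos ((hiffy u).mpr h)]
    · rw [if_neg (fun hc => h ((hiffx u).mp hc)), if_neg (fun hc => h ((hiffy u).mp hc))]
  have hWsymm : ∀ u w, WGz G Om u w = WGz G Om w u := by
    intro u w
    unfold WGz
    have hiff : (∃ i j, G.Adj i j ∧ u ∈ Om i ∧ w ∈ Om j) ↔ (∃ i j, G.Adj i j ∧ w ∈ Om i ∧ u ∈ Om j) := by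
      constructor <;> · rintro ⟨i, j, hij, h1, h2⟩; exact ⟨j, i, hij.symm, h2, h1⟩
    by_cases h : ∃ i j, G.Adj i j ∧ u ∈ Om i ∧ w ∈ Om j
    · rw [if_pos h, if_pos (hiff.mp h)]
    · rw [if_neg h, if_neg (fun hc => h (hiff.mpr hc))]
  have hWmem : ∀ u w, WGz G Om u w = 0 ∨ WGz G Om u w = 1 := by
    intro u w
    unfold WGz
    by_cases h : ∃ i j, G.Adj i j ∧ u ∈ Om i ∧ w ∈ Om j
    · exact Or.inr (if_pos h)
    · exact Or.inl (if_neg h)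
  have hWxy : WGz G Om x y = 0 := by
    unfold WGz
    refine if_neg (fun hc => ?_)
    obtain ⟨j, hij, hyj⟩ := (hiffx y).mp hc
    exact hij.ne ((hpart y j hyj hy).symm)
  -- notation
  set p : Σ i : VF, Fin (m i) := ⟨r₁, ⟨0, hm r₁⟩⟩ with hp
  set q : Σ i : VF, Fin (m i) := ⟨r₂, ⟨0, hm r₂⟩⟩ with hq
  have hqp : q ≠ p := fun h => hr (congrArg Sigma.fst h).symm
  have hasgp : ∀ v, asg p q x y v p = x := fun v => by simp [asg]
  have hasgq : ∀ v, asg p q x y v q = y := fun v => by simp [asg, hqp]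
  have hasgo : ∀ (v) (a : Σ i : VF, Fin (m i)), a.1 ≠ r₁ → a.1 ≠ r₂ →
      asg p q x y v a = v a := by
    intro v a h1 h2
    have hap : a ≠ p := fun h => h1 (congrArg Sigma.fst h)
    have haq : a ≠ q := fun h => h2 (congrArg Sigma.fst h)
    simp [asg, hap, haq]
  unfold rdensity
  refine integral_eq_zero_of_ae (Filter.Eventually.of_forall fun v => ?_)
  simp only [Pi.zero_apply]
  have hfac : ∀ a b : Σ i : VF, Fin (m i), a.1 < b.1 ∨ b.1 < a.1 →
      ∃ e : (Σ i : VF, Fin (m i)) × (Σ i : VF, Fin (m i)),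
        (e.1.1 < e.2.1 ∨ (e.1.1 = e.2.1 ∧ (e.1.2 : ℕ) < (e.2.2 : ℕ))) ∧
        (if (SimpleGraph.comap (Sigma.fst) F).Adj e.1 e.2 then
            WGz G Om (asg p q x y v e.1) (asg p q x y v e.2)
          else 1 - WGz G Om (asg p q x y v e.1) (asg p q x y v e.2))
        = (if F.Adj a.1 b.1 then WGz G Om (asg p q x y v a) (asg p q x y v b)
          else 1 - WGz G Om (asg p q x y v a) (asg p q x y v b)) := by
    intro a b hab
    rcases hab with h | h
    · exact ⟨(a, b), Or.inl h, by simp only [SimpleGraph.comap_adj]⟩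
    · refine ⟨(b, a), Or.inl h, ?_⟩
      simp only [SimpleGraph.comap_adj]
      rw [F.adj_comm b.1 a.1, hWsymm (asg p q x y v b) (asg p q x y v a)]
  by_cases hadj : F.Adj r₁ r₂
  · obtain ⟨e, hlt, heq⟩ := hfac p q (hr.lt_or_gt)
    refine Finset.prod_eq_zero (i := e)
          (by simp only [Finset.mem_filter]; exact ⟨Finset.mem_univ _, hlt⟩) ?_
    erw [heq, if_pos hadj, hasgp, hasgq]
    exact hWxy
  · -- roots non-adjacent: find a distinguishing vertex w
    have hN : F.neighborSet r₁ ≠ F.neighborSet r₂ := by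
      intro h
      rcases htfF r₁ r₂ with h' | h'
      · rcases h' with ⟨-, hb⟩ | ⟨-, hb⟩ <;> simp at hb
      · exact hr (h' h)
    obtain ⟨w, hw⟩ : ∃ w, ¬(w ∈ F.neighborSet r₁ ↔ w ∈ F.neighborSet r₂) := by
      by_contra h
      push_neg at h
      exact hN (Set.ext fun w => h w)
    simp only [SimpleGraph.mem_neighborSet] at hw
    have hw' : (F.Adj r₁ w ∧ ¬F.Adj r₂ w) ∨ (F.Adj r₂ w ∧ ¬F.Adj r₁ w) := by
      by_cases h1 : F.Adj r₁ w <;> by_cases h2 : F.Adj r₂ w <;> tauto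
    have hwr1 : w ≠ r₁ := by
      rintro rfl
      rcases hw' with ⟨h1, _⟩ | ⟨h1, _⟩
      · exact F.irrefl h1
      · exact hadj (h1.symm)
    have hwr2 : w ≠ r₂ := by
      rintro rfl
      rcases hw' with ⟨h1, _⟩ | ⟨h1, _⟩
      · exact hadj h1
      · exact F.irrefl h1
    set aw : Σ i : VF, Fin (m i) := ⟨w, ⟨0, hm w⟩⟩ with haw
    have hasgw : asg p q x y v aw = v aw := hasgo v aw hwr1 hwr2
    rcases hw' with ⟨h1, h2⟩ | ⟨h1, h2⟩
    · rcases hWmem x (v aw) with ht | ht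
      · obtain ⟨e, hlt, heq⟩ := hfac p aw (Ne.lt_or_gt (fun h => hwr1 h.symm))
        refine Finset.prod_eq_zero (i := e)
          (by simp only [Finset.mem_filter]; exact ⟨Finset.mem_univ _, hlt⟩) ?_
        erw [heq, if_pos h1, hasgp, hasgw]
        exact ht
      · obtain ⟨e, hlt, heq⟩ := hfac q aw (Ne.lt_or_gt (fun h => hwr2 h.symm))
        refine Finset.prod_eq_zero (i := e)
          (by simp only [Finset.mem_filter]; exact ⟨Finset.mem_univ _, hlt⟩) ?_
        erw [heq, if_neg h2, hasgq, hasgw, ← hWeq, ht]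
        ring
    · rcases hWmem x (v aw) with ht | ht
      · obtain ⟨e, hlt, heq⟩ := hfac q aw (Ne.lt_or_gt (fun h => hwr2 h.symm))
        refine Finset.prod_eq_zero (i := e)
          (by simp only [Finset.mem_filter]; exact ⟨Finset.mem_univ _, hlt⟩) ?_
        erw [heq, if_pos h1, hasgq, hasgw, ← hWeq]
        exact ht
      · obtain ⟨e, hlt, heq⟩ := hfac p aw (Ne.lt_or_gt (fun h => hwr1 h.symm))
        refine Finset.prod_eq_zero (i := e)
          (by simp only [Finset.mem_filter]; exact ⟨Finset.mem_univ _, hlt⟩) ?_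
        erw [heq, if_neg h2, hasgp, hasgw, ht]
        ring

end
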